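/- Let n ≥ 3, let f₁,…,fₙ : ℝ → ℝ be twice continuously differentiable, and suppose there are two distinct indices i ≠ j, nonzero constants γᵢ, γⱼ, λᵢ, λⱼ with fᵢ(t) = γᵢ e^{λᵢ t} and fⱼ(t) = γⱼ e^{λⱼ t}. Then the function f(x₁,…,xₙ) = f₁(x₁)·…·fₙ(xₙ) has identically vanishing Hessian determinant: det H(f)(x) = 0 for all x ∈ ℝⁿ where f is defined. -/

import Mathlib

open Real Finset

/-- The partial derivative of `f : ℝⁿ → ℝ` in the `i`-th coordinate direction. -/
noncomputable def pderiv' {n : ℕ} (f : (Fin n → ℝ) → ℝ) (i : Fin n) (x : Fin n → ℝ) : ℝ :=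
  deriv (fun t => f (Function.update x i t)) (x i)

/-- The Hessian matrix of second-order partial derivatives of `f : ℝⁿ → ℝ`. -/
noncomputable def hessian {n : ℕ} (f : (Fin n → ℝ) → ℝ) (x : Fin n → ℝ) :
    Matrix (Fin n) (Fin n) ℝ :=
  Matrix.of fun i j => pderiv' (pderiv' f j) i x

private lemma hasDerivAt_gexp (γ lam t : ℝ) :
    HasDerivAt (fun s : ℝ => γ * Real.exp (lam * s)) (lam * (γ * Real.exp (lam * t))) t := by
  have h1 : HasDerivAt (fun s : ℝ => lam * s) lam t := by
    simpa using (hasDerivAt_id t).const_mul lam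
  have h2 := (Real.hasDerivAt_exp (lam * t)).comp t h1
  have h3 := h2.const_mul γ
  exact h3.congr_deriv (by ring)

/-- First partial derivative of a product function. -/
private lemma pderiv_prod {n : ℕ} (F : Fin n → ℝ → ℝ)
    (hC2 : ∀ k, ContDiff ℝ 2 (F k))
    (f : (Fin n → ℝ) → ℝ) (hf : ∀ x, f x = ∏ k, F k (x k))
    (k : Fin n) (x : Fin n → ℝ) :
    pderiv' f k x = deriv (F k) (x k) * ∏ l ∈ Finset.univ.erase k, F l (x l) := by
  have hfun : (fun t => f (Function.update x k t))
      = fun t => F k t * ∏ l ∈ Finset.univ.erase k, F l (x l) := by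
    funext t
    rw [hf, ← Finset.mul_prod_erase Finset.univ _ (Finset.mem_univ k)]
    simp only [Function.update_self]
    congr 1
    refine Finset.prod_congr rfl fun l hl => ?_
    rw [Function.update_of_ne (Finset.ne_of_mem_erase hl)]
  rw [pderiv', hfun,
    deriv_mul_const (((hC2 k).differentiable (by norm_num)).differentiableAt)]

/-- Row `a` of the Hessian when `F a` is an exponential. -/
private lemma hessian_row {n : ℕ} (F : Fin n → ℝ → ℝ)
    (hC2 : ∀ k, ContDiff ℝ 2 (F k))
    (f : (Fin n → ℝ) → ℝ) (hf : ∀ x, f x = ∏ k, F k (x k))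
    (a : Fin n) (γ lam : ℝ) (hFa : ∀ t, F a t = γ * Real.exp (lam * t))
    (x : Fin n → ℝ) (k : Fin n) :
    hessian f x a k = lam * (deriv (F k) (x k) * ∏ l ∈ Finset.univ.erase k, F l (x l)) := by
  have hFa' : F a = fun t => γ * Real.exp (lam * t) := funext hFa
  have hdFa : deriv (F a) = fun t => lam * (γ * Real.exp (lam * t)) := by
    funext t
    rw [hFa']
    exact (hasDerivAt_gexp γ lam t).deriv
  have hg : ∀ y, pderiv' f k y = deriv (F k) (y k) * ∏ l ∈ Finset.univ.erase k, F l (y l) :=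
    fun y => pderiv_prod F hC2 f hf k y
  have hH : hessian f x a k
      = deriv (fun t => pderiv' f k (Function.update x a t)) (x a) := rfl
  rcases eq_or_ne k a with hkeq | hkne
  · subst hkeq
    have hfun : (fun t => pderiv' f k (Function.update x k t))
        = fun t => lam * (γ * Real.exp (lam * t)) * ∏ l ∈ Finset.univ.erase k, F l (x l) := by
      funext t
      rw [hg]
      simp only [Function.update_self]
      rw [hdFa]
      congr 1
      refine Finset.prod_congr rfl fun l hl => ?_
      rw [Function.update_of_ne (Finset.ne_of_mem_erase hl)]
    rw [hH, hfun]
    have hd := ((hasDerivAt_gexp γ lam (x k)).const_mul lam).mul_const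
      (∏ l ∈ Finset.univ.erase k, F l (x l))
    rw [hd.deriv, hdFa]
    ring
  · -- k ≠ a
    have ha_mem : a ∈ Finset.univ.erase k := Finset.mem_erase.2 ⟨(Ne.symm hkne), Finset.mem_univ a⟩
    set C2 : ℝ := ∏ l ∈ (Finset.univ.erase k).erase a, F l (x l) with hC2def
    set D : ℝ := deriv (F k) (x k) with hD
    have hfun : (fun t => pderiv' f k (Function.update x a t))
        = fun t => D * (γ * Real.exp (lam * t)) * C2 := by
      funext t
      rw [hg]
      rw [Function.update_of_ne hkne]
      rw [← Finset.mul_prod_erase _ _ ha_mem]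
      simp only [Function.update_self]
      rw [hFa t]
      have : (∏ l ∈ (Finset.univ.erase k).erase a, F l (Function.update x a t l)) = C2 := by
        refine Finset.prod_congr rfl fun l hl => ?_
        rw [Function.update_of_ne (Finset.ne_of_mem_erase hl)]
      rw [this]
      ring
    rw [hH, hfun]
    have hd := ((hasDerivAt_gexp γ lam (x a)).const_mul D).mul_const C2
    rw [hd.deriv]
    have hsplit : (∏ l ∈ Finset.univ.erase k, F l (x l)) = F a (x a) * C2 :=
      (Finset.mul_prod_erase _ _ ha_mem).symm
    rw [hsplit, hFa (x a)]
    ring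

/-- If two of the components of a homothetical function
`f(x₁,…,xₙ) = f₁(x₁)⋯fₙ(xₙ)` (with `n ≥ 3` and C² components) are exponentials
`γ e^{λ t}` with nonzero `γ, λ`, then the Hessian determinant of `f` vanishes
identically. -/
theorem stmt_2 (n : ℕ) (hn : 3 ≤ n) (F : Fin n → ℝ → ℝ)
    (hC2 : ∀ k, ContDiff ℝ 2 (F k))
    (i j : Fin n) (hij : i ≠ j)
    (γi γj lami lamj : ℝ)
    (hγi : γi ≠ 0) (hγj : γj ≠ 0) (hlami : lami ≠ 0) (hlamj : lamj ≠ 0)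
    (hFi : ∀ t, F i t = γi * Real.exp (lami * t))
    (hFj : ∀ t, F j t = γj * Real.exp (lamj * t))
    (f : (Fin n → ℝ) → ℝ)
    (hf : ∀ x, f x = ∏ k, F k (x k)) :
    ∀ x : Fin n → ℝ, (hessian f x).det = 0 := by
  intro x
  set M := hessian f x with hM
  set g : Fin n → ℝ :=
    fun k => deriv (F k) (x k) * ∏ l ∈ Finset.univ.erase k, F l (x l) with hgdef
  have hrowi : M i = fun k => lami * g k :=
    funext fun k => hessian_row F hC2 f hf i γi lami hFi x k
  have hrowj : M j = fun k => lamj * g k :=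
    funext fun k => hessian_row F hC2 f hf j γj lamj hFj x k
  have h1 : M i = (lami / lamj) • M j := by
    funext k
    rw [hrowi, hrowj]
    simp only [Pi.smul_apply, smul_eq_mul]
    field_simp
  calc M.det = (M.updateRow i ((lami / lamj) • M j)).det := by
        rw [← h1, Matrix.updateRow_eq_self]
    _ = (lami / lamj) * (M.updateRow i (M j)).det := Matrix.det_updateRow_smul M i _ _
    _ = (lami / lamj) * 0 := by
        rw [Matrix.det_zero_of_row_eq hij]
        rw [Matrix.updateRow_self, Matrix.updateRow_ne (Ne.symm hij)]
    _ = 0 := mul_zero _
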